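/- Let R be a commutative ring and M an R-module. Suppose there is a short exact sequence 0 → G → Q → M → 0 with Q projective, a short exact sequence 0 → G → P → G → 0 with P projective, and Ext_R^1(G,Q) = 0. Then there exists a short exact sequence 0 → M → X → M → 0 where X fits in a short exact sequence 0 → P → Q⊕Q → X → 0; in particular pd_R(X) ≤ 1. -/

import Mathlib

noncomputable section

universe u

variable (R : Type u) [CommRing R]

/-- `IsShortExact R f g` says that `0 → A → B → C → 0` is a short exact sequence. -/
def IsShortExact {A B C : Type u} [AddCommGroup A] [Module R A] [AddCommGroup B] [Module R B]
    [AddCommGroup C] [Module R C] (f : A →ₗ[R] B) (g : B →ₗ[R] C) : Prop :=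
  Function.Injective f ∧ Function.Surjective g ∧ LinearMap.range f = LinearMap.ker g

/-- A module `M` is Gorenstein projective if there is a complete projective resolution
`⋯ → P i → P (i+1) → ⋯` (an exact sequence of projective modules which remains exact after
applying `Hom(-, Q)` for every projective module `Q`) with `M ≅ Im (P 0 → P 1)`. -/
def IsGorensteinProjective (M : Type u) [AddCommGroup M] [Module R M] : Prop :=
  ∃ (P : ℤ → Type u) (_ : ∀ i, AddCommGroup (P i)) (_ : ∀ i, Module R (P i))
    (d : ∀ i, P i →ₗ[R] P (i + 1)),
    (∀ i, Module.Projective R (P i)) ∧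
    (∀ i, LinearMap.range (d i) = LinearMap.ker (d (i + 1))) ∧
    Nonempty (M ≃ₗ[R] LinearMap.range (d 0)) ∧
    (∀ (Q : Type u) (_ : AddCommGroup Q) (_ : Module R Q), Module.Projective R Q →
      ∀ (i : ℤ) (g : P (i + 1) →ₗ[R] Q), g.comp (d i) = 0 →
        ∃ h : P (i + 1 + 1) →ₗ[R] Q, h.comp (d (i + 1)) = g)

/-- A module `M` is strongly Gorenstein projective if there is a complete projective
resolution of the form `⋯ → P →f P →f P → ⋯` with `M ≅ Im f`. -/
def IsStronglyGorensteinProjective (M : Type u) [AddCommGroup M] [Module R M] : Prop :=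
  ∃ (P : Type u) (_ : AddCommGroup P) (_ : Module R P) (f : P →ₗ[R] P),
    Module.Projective R P ∧
    LinearMap.range f = LinearMap.ker f ∧
    Nonempty (M ≃ₗ[R] LinearMap.range f) ∧
    (∀ (Q : Type u) (_ : AddCommGroup Q) (_ : Module R Q), Module.Projective R Q →
      ∀ g : P →ₗ[R] Q, g.comp f = 0 → ∃ h : P →ₗ[R] Q, h.comp f = g)

/-- A module `M` is Gorenstein flat if there is an exact sequence of flat modules
`⋯ → F i → F (i+1) → ⋯` which remains exact after applying `- ⊗ I` for every injective
module `I`, with `M ≅ Im (F 0 → F 1)`. -/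
def IsGorensteinFlat (M : Type u) [AddCommGroup M] [Module R M] : Prop :=
  ∃ (F : ℤ → Type u) (_ : ∀ i, AddCommGroup (F i)) (_ : ∀ i, Module R (F i))
    (d : ∀ i, F i →ₗ[R] F (i + 1)),
    (∀ i, Module.Flat R (F i)) ∧
    (∀ i, LinearMap.range (d i) = LinearMap.ker (d (i + 1))) ∧
    Nonempty (M ≃ₗ[R] LinearMap.range (d 0)) ∧
    (∀ (I : Type u) (_ : AddCommGroup I) (_ : Module R I), Module.Injective R I →
      ∀ i : ℤ, LinearMap.range (LinearMap.rTensor I (d i)) =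
        LinearMap.ker (LinearMap.rTensor I (d (i + 1))))

/-- A module `M` is strongly Gorenstein flat if there is an exact sequence of flat modules
of the form `⋯ → F →f F →f F → ⋯` which remains exact after applying `- ⊗ I` for every
injective module `I`, with `M ≅ Im f`. -/
def IsStronglyGorensteinFlat (M : Type u) [AddCommGroup M] [Module R M] : Prop :=
  ∃ (F : Type u) (_ : AddCommGroup F) (_ : Module R F) (f : F →ₗ[R] F),
    Module.Flat R F ∧
    LinearMap.range f = LinearMap.ker f ∧
    Nonempty (M ≃ₗ[R] LinearMap.range f) ∧
    (∀ (I : Type u) (_ : AddCommGroup I) (_ : Module R I), Module.Injective R I →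
      LinearMap.range (LinearMap.rTensor I f) = LinearMap.ker (LinearMap.rTensor I f))

/-- `ProjDimLE R M n` : the projective dimension of `M` is at most `n`, i.e. there is an exact
sequence `0 → P n → ⋯ → P 0 → M → 0` with each `P i` projective. -/
def ProjDimLE (M : Type u) [AddCommGroup M] [Module R M] (n : ℕ) : Prop :=
  ∃ (P : ℕ → Type u) (_ : ∀ i, AddCommGroup (P i)) (_ : ∀ i, Module R (P i))
    (d : ∀ i, P (i + 1) →ₗ[R] P i) (ε : P 0 →ₗ[R] M),
    (∀ i, Module.Projective R (P i)) ∧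
    (∀ i, n < i → Subsingleton (P i)) ∧
    Function.Surjective ε ∧
    LinearMap.ker ε = LinearMap.range (d 0) ∧
    (∀ i, LinearMap.ker (d i) = LinearMap.range (d (i + 1)))

/-- `InjDimLE R M n` : the injective dimension of `M` is at most `n`, i.e. there is an exact
sequence `0 → M → E 0 → ⋯ → E n → 0` with each `E i` injective. -/
def InjDimLE (M : Type u) [AddCommGroup M] [Module R M] (n : ℕ) : Prop :=
  ∃ (E : ℕ → Type u) (_ : ∀ i, AddCommGroup (E i)) (_ : ∀ i, Module R (E i))
    (d : ∀ i, E i →ₗ[R] E (i + 1)) (η : M →ₗ[R] E 0),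
    (∀ i, Module.Injective R (E i)) ∧
    (∀ i, n < i → Subsingleton (E i)) ∧
    Function.Injective η ∧
    LinearMap.range η = LinearMap.ker (d 0) ∧
    (∀ i, LinearMap.range (d i) = LinearMap.ker (d (i + 1)))

/-- `FlatDimLE R M n` : the flat dimension of `M` is at most `n`. -/
def FlatDimLE (M : Type u) [AddCommGroup M] [Module R M] (n : ℕ) : Prop :=
  ∃ (F : ℕ → Type u) (_ : ∀ i, AddCommGroup (F i)) (_ : ∀ i, Module R (F i))
    (d : ∀ i, F (i + 1) →ₗ[R] F i) (ε : F 0 →ₗ[R] M),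
    (∀ i, Module.Flat R (F i)) ∧
    (∀ i, n < i → Subsingleton (F i)) ∧
    Function.Surjective ε ∧
    LinearMap.ker ε = LinearMap.range (d 0) ∧
    (∀ i, LinearMap.ker (d i) = LinearMap.range (d (i + 1)))

/-- `GProjDimLE R M n` : the Gorenstein projective dimension of `M` is at most `n`, i.e.
there is an exact sequence `0 → G n → ⋯ → G 0 → M → 0` with each `G i` Gorenstein
projective. -/
def GProjDimLE (M : Type u) [AddCommGroup M] [Module R M] (n : ℕ) : Prop :=
  ∃ (G : ℕ → Type u) (_ : ∀ i, AddCommGroup (G i)) (_ : ∀ i, Module R (G i))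
    (d : ∀ i, G (i + 1) →ₗ[R] G i) (ε : G 0 →ₗ[R] M),
    (∀ i, IsGorensteinProjective R (G i)) ∧
    (∀ i, n < i → Subsingleton (G i)) ∧
    Function.Surjective ε ∧
    LinearMap.ker ε = LinearMap.range (d 0) ∧
    (∀ i, LinearMap.ker (d i) = LinearMap.range (d (i + 1)))

/-- `GFlatDimLE R M n` : the Gorenstein flat dimension of `M` is at most `n`. -/
def GFlatDimLE (M : Type u) [AddCommGroup M] [Module R M] (n : ℕ) : Prop :=
  ∃ (G : ℕ → Type u) (_ : ∀ i, AddCommGroup (G i)) (_ : ∀ i, Module R (G i))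
    (d : ∀ i, G (i + 1) →ₗ[R] G i) (ε : G 0 →ₗ[R] M),
    (∀ i, IsGorensteinFlat R (G i)) ∧
    (∀ i, n < i → Subsingleton (G i)) ∧
    Function.Surjective ε ∧
    LinearMap.ker ε = LinearMap.range (d 0) ∧
    (∀ i, LinearMap.ker (d i) = LinearMap.range (d (i + 1)))

/-- A module is finitely presented if it is the quotient of a finite free module by a
finitely generated submodule of relations. -/
def IsFinitelyPresented (M : Type u) [AddCommGroup M] [Module R M] : Prop :=
  ∃ (n : ℕ) (f : (Fin n → R) →ₗ[R] M), Function.Surjective f ∧ (LinearMap.ker f).FG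

/-- A ring is coherent if every finitely generated ideal is finitely presented. -/
def IsCoherentRing : Prop :=
  ∀ I : Ideal R, I.FG → IsFinitelyPresented R I

/-- `ExtVanishes R M N i` : `Ext_R^i(M, N) = 0`. -/
def ExtVanishes (M N : Type u) [AddCommGroup M] [Module R M] [AddCommGroup N] [Module R N]
    (i : ℕ) : Prop :=
  Subsingleton (((Ext R (ModuleCat.{u} R) i).obj
    (Opposite.op (ModuleCat.of R M))).obj (ModuleCat.of R N))

/-- A ring is hereditary if every submodule of a projective module is projective. -/
def IsHereditaryRing : Prop :=
  ∀ (P : Type u) (_ : AddCommGroup P) (_ : Module R P), Module.Projective R P →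
    ∀ N : Submodule R P, Module.Projective R N

/-- A ring is semihereditary if every finitely generated ideal is projective. -/
def IsSemihereditaryRing : Prop :=
  ∀ I : Ideal R, I.FG → Module.Projective R I

/-- A ring is Gorenstein hereditary if every submodule of a projective module is
Gorenstein projective. -/
def IsGHereditaryRing : Prop :=
  ∀ (P : Type u) (_ : AddCommGroup P) (_ : Module R P), Module.Projective R P →
    ∀ N : Submodule R P, IsGorensteinProjective R N

/-- A ring is strongly Gorenstein hereditary if every submodule of a projective module is
strongly Gorenstein projective. -/
def IsSGHereditaryRing : Prop :=
  ∀ (P : Type u) (_ : AddCommGroup P) (_ : Module R P), Module.Projective R P →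
    ∀ N : Submodule R P, IsStronglyGorensteinProjective R N

/-- A ring is Gorenstein semihereditary if it is coherent and every submodule of a flat
module is Gorenstein flat. -/
def IsGSemihereditaryRing : Prop :=
  IsCoherentRing R ∧
    ∀ (F : Type u) (_ : AddCommGroup F) (_ : Module R F), Module.Flat R F →
      ∀ N : Submodule R F, IsGorensteinFlat R N

/-- A ring is strongly Gorenstein semihereditary if it is coherent and every submodule of a
flat module is strongly Gorenstein flat. -/
def IsSGSemihereditaryRing : Prop :=
  IsCoherentRing R ∧
    ∀ (F : Type u) (_ : AddCommGroup F) (_ : Module R F), Module.Flat R F →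
      ∀ N : Submodule R F, IsStronglyGorensteinFlat R N

section AuxSGH

open CategoryTheory Limits

variable {R : Type u} [CommRing R]
variable {G P Q : Type u} [AddCommGroup G] [Module R G] [AddCommGroup P] [Module R P]
  [AddCommGroup Q] [Module R Q]

section LHD
open ShortComplex

@[simps K H i π]
def myLHD (S : ShortComplex (ModuleCat.{u} R)) (hg : S.g = 0)
    (H : ModuleCat.{u} R) (p : S.X₂ ⟶ H) (hsurj : Function.Surjective p)
    (hker : LinearMap.ker p.hom = LinearMap.range S.f.hom) : S.LeftHomologyData where
  K := S.X₂
  H := H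
  i := 𝟙 S.X₂
  π := p
  wi := by simp [hg]
  hi := KernelFork.IsLimit.ofId S.g hg
  wπ := by
    have hlift : (KernelFork.IsLimit.ofId S.g hg).lift (KernelFork.ofι S.f S.zero) = S.f := by
      have := Fork.IsLimit.lift_ι (t := KernelFork.ofι S.f S.zero) (KernelFork.IsLimit.ofId S.g hg)
      simpa using this
    rw [hlift]
    ext x
    show p (S.f x) = 0
    have : S.f x ∈ LinearMap.ker p.hom := by rw [hker]; exact ⟨x, rfl⟩
    exact this
  hπ := by
    have hlift : (KernelFork.IsLimit.ofId S.g hg).lift (KernelFork.ofι S.f S.zero) = S.f := by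
      have := Fork.IsLimit.lift_ι (t := KernelFork.ofι S.f S.zero) (KernelFork.IsLimit.ofId S.g hg)
      simpa using this
    have hepi : Epi p := by rw [ModuleCat.epi_iff_surjective]; exact hsurj
    refine CokernelCofork.IsColimit.ofπ' p _ (fun {A} k hk => ?_)
    rw [hlift] at hk
    have hker' : LinearMap.ker p.hom ≤ LinearMap.ker k.hom := by
      rw [hker]
      rintro x ⟨y, rfl⟩
      exact congrArg (fun φ => φ.hom y) hk
    refine ⟨ModuleCat.ofHom ((LinearMap.ker p.hom).liftQ k.hom hker' ∘ₗ
      (p.hom.quotKerEquivOfSurjective hsurj).symm.toLinearMap), ?_⟩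
    ext x
    show ((LinearMap.ker p.hom).liftQ k.hom hker')
      ((p.hom.quotKerEquivOfSurjective hsurj).symm (p x)) = k x
    have : (p.hom.quotKerEquivOfSurjective hsurj).symm (p x)
        = Submodule.Quotient.mk x := by
      rw [LinearEquiv.symm_apply_eq]
      rfl
    rw [this]
    rfl

lemma myLHD_f' (S : ShortComplex (ModuleCat.{u} R)) (hg : S.g = 0)
    (H : ModuleCat.{u} R) (p : S.X₂ ⟶ H) (hsurj : Function.Surjective p)
    (hker : LinearMap.ker p.hom = LinearMap.range S.f.hom) :
    (myLHD S hg H p hsurj hker).f' = S.f := by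
  have := (myLHD S hg H p hsurj hker).f'_i
  exact (Category.comp_id _).symm.trans this

end LHD

section Res

variable (ι₂ : G →ₗ[R] P) (π₂ : P →ₗ[R] G)

lemma π₂ι₂ (h₂ : IsShortExact R ι₂ π₂) (x : G) : π₂ (ι₂ x) = 0 := by
  have : ι₂ x ∈ LinearMap.ker π₂ := by rw [← h₂.2.2]; exact ⟨x, rfl⟩
  exact this

-- the chain complex ⋯ → P → P → P with differential f = ι₂ ∘ π₂
def resComplex (h₂ : IsShortExact R ι₂ π₂) : ChainComplex (ModuleCat.{u} R) ℕ :=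
  ChainComplex.of (fun _ => ModuleCat.of R P)
    (fun _ => (ModuleCat.ofHom (ι₂ ∘ₗ π₂) : ModuleCat.of R P ⟶ ModuleCat.of R P))
    (by
      intro n
      ext p
      show ι₂ (π₂ (ι₂ (π₂ p))) = 0
      rw [π₂ι₂ ι₂ π₂ h₂, map_zero])

lemma resComplex_d (h₂ : IsShortExact R ι₂ π₂) (n : ℕ) :
    (resComplex ι₂ π₂ h₂).d (n + 1) n = ModuleCat.ofHom (ι₂ ∘ₗ π₂) :=
  ChainComplex.of_d (fun _ => ModuleCat.of R P) (fun _ => ModuleCat.ofHom (ι₂ ∘ₗ π₂)) n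

def resπ (h₂ : IsShortExact R ι₂ π₂) :  resComplex ι₂ π₂ h₂ ⟶ (ChainComplex.single₀ (ModuleCat.{u} R)).obj (ModuleCat.of R G) :=
  (ChainComplex.toSingle₀Equiv _ _).symm
    ⟨(ModuleCat.ofHom π₂ : ModuleCat.of R P ⟶ ModuleCat.of R G), by
      rw [resComplex_d]
      ext p
      exact π₂ι₂ ι₂ π₂ h₂ (π₂ p)⟩

lemma resπ_f_zero (h₂ : IsShortExact R ι₂ π₂) : (resπ ι₂ π₂ h₂).f 0 = ModuleCat.ofHom π₂ := by
  rfl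

-- surjectivity facts
lemma exact_mid (h₂ : IsShortExact R ι₂ π₂) (x : P) (hx : ι₂ (π₂ x) = 0) : ∃ y : P, ι₂ (π₂ y) = x := by
  have h1 : π₂ x = 0 := h₂.1 (by rw [hx, map_zero])
  have h2 : x ∈ LinearMap.range ι₂ := by rw [h₂.2.2]; exact h1
  obtain ⟨g, hg⟩ := h2
  obtain ⟨p, hp⟩ := h₂.2.1 g
  exact ⟨p, by rw [hp, hg]⟩

def res (h₂ : IsShortExact R ι₂ π₂) (hP : Module.Projective R P) : ProjectiveResolution (ModuleCat.of R G) where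
  complex := resComplex ι₂ π₂ h₂
  projective n := (IsProjective.iff_projective P).mp hP
  π := resπ ι₂ π₂ h₂
  quasiIso := by
    constructor
    intro i
    match i with
    | 0 =>
        rw [ChainComplex.quasiIsoAt₀_iff]
        have hg₁ : ((HomologicalComplex.shortComplexFunctor' (ModuleCat.{u} R) _ 1 0 0).obj
            (resComplex ι₂ π₂ h₂)).g = 0 :=
          (resComplex ι₂ π₂ h₂).shape 0 0 (by simp)
        have hg₂ : ((HomologicalComplex.shortComplexFunctor' (ModuleCat.{u} R) _ 1 0 0).obj
            ((ChainComplex.single₀ (ModuleCat.{u} R)).obj (ModuleCat.of R G))).g = 0 :=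
          ((ChainComplex.single₀ (ModuleCat.{u} R)).obj (ModuleCat.of R G)).shape 0 0 (by simp)
        have hf₂ : ((HomologicalComplex.shortComplexFunctor' (ModuleCat.{u} R) _ 1 0 0).obj
            ((ChainComplex.single₀ (ModuleCat.{u} R)).obj (ModuleCat.of R G))).f = 0 := by
          apply (HomologicalComplex.isZero_single_obj_X (ComplexShape.down ℕ) 0
            (ModuleCat.of R G) 1 (by simp)).eq_of_src
        have hker₁ : LinearMap.ker (ModuleCat.Hom.hom (ModuleCat.ofHom π₂ :
            ((HomologicalComplex.shortComplexFunctor' (ModuleCat.{u} R) _ 1 0 0).obj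
              (resComplex ι₂ π₂ h₂)).X₂ ⟶ ModuleCat.of R G))
            = LinearMap.range ((HomologicalComplex.shortComplexFunctor'
              (ModuleCat.{u} R) _ 1 0 0).obj (resComplex ι₂ π₂ h₂)).f.hom := by
          rw [show ((HomologicalComplex.shortComplexFunctor' (ModuleCat.{u} R) _ 1 0 0).obj
              (resComplex ι₂ π₂ h₂)).f = (resComplex ι₂ π₂ h₂).d 1 0 from rfl,
            resComplex_d ι₂ π₂ h₂ 0]
          show LinearMap.ker π₂ = LinearMap.range (ι₂ ∘ₗ π₂)
          rw [← h₂.2.2, LinearMap.range_comp_of_range_eq_top ι₂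
            (LinearMap.range_eq_top.2 h₂.2.1)]
        have hker₂ : LinearMap.ker (ModuleCat.Hom.hom (𝟙 (ModuleCat.of R G) :
            ((HomologicalComplex.shortComplexFunctor' (ModuleCat.{u} R) _ 1 0 0).obj
              ((ChainComplex.single₀ (ModuleCat.{u} R)).obj (ModuleCat.of R G))).X₂
              ⟶ ModuleCat.of R G))
            = LinearMap.range ((HomologicalComplex.shortComplexFunctor'
              (ModuleCat.{u} R) _ 1 0 0).obj
              ((ChainComplex.single₀ (ModuleCat.{u} R)).obj (ModuleCat.of R G))).f.hom := by
          rw [hf₂]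
          ext x
          simp only [LinearMap.mem_ker, LinearMap.mem_range]
          constructor
          · intro h
            exact ⟨0, by subst h; rfl⟩
          · rintro ⟨y, rfl⟩
            rfl
        let mapdata : ShortComplex.LeftHomologyMapData
            ((HomologicalComplex.shortComplexFunctor' (ModuleCat.{u} R) _ 1 0 0).map
              (resπ ι₂ π₂ h₂))
            (myLHD _ hg₁ (ModuleCat.of R G) (ModuleCat.ofHom π₂) h₂.2.1 hker₁)
            (myLHD _ hg₂ (ModuleCat.of R G) (𝟙 (ModuleCat.of R G)) (fun x => ⟨x, rfl⟩) hker₂) :=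
          { φK := (resπ ι₂ π₂ h₂).f 0
            φH := 𝟙 (ModuleCat.of R G)
            commi := (Category.comp_id _).trans (Category.id_comp _).symm
            commf' := by
              erw [myLHD_f', myLHD_f', hf₂, Limits.comp_zero]
              rw [show ((HomologicalComplex.shortComplexFunctor' (ModuleCat.{u} R) _ 1 0 0).obj
                  (resComplex ι₂ π₂ h₂)).f = (resComplex ι₂ π₂ h₂).d 1 0 from rfl,
                resComplex_d ι₂ π₂ h₂ 0]
              rw [resπ_f_zero]
              ext p
              show π₂ (ι₂ (π₂ p)) = 0
              rw [π₂ι₂ ι₂ π₂ h₂]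
            commπ := (Category.comp_id _).trans (Category.comp_id _).symm }
        exact (mapdata.quasiIso_iff).2
          (by exact inferInstanceAs (IsIso (𝟙 (ModuleCat.of R G))))
    | (n+1) =>
        rw [quasiIsoAt_iff_exactAt' _ _ (ChainComplex.exactAt_succ_single_obj _ _)]
        rw [HomologicalComplex.exactAt_iff' _ (n+2) (n+1) n (by simp) (by simp)]
        rw [ShortComplex.moduleCat_exact_iff]
        intro (x : P) hx
        have hx' : ι₂ (π₂ x) = 0 := by
          have := hx
          rw [show (HomologicalComplex.sc' (resComplex ι₂ π₂ h₂) (n + 2) (n + 1) n).g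
              = (resComplex ι₂ π₂ h₂).d (n+1) n from rfl, resComplex_d] at this
          exact this
        obtain ⟨y, hy⟩ := exact_mid ι₂ π₂ h₂ x hx'
        refine ⟨y, ?_⟩
        rw [show (HomologicalComplex.sc' (resComplex ι₂ π₂ h₂) (n + 2) (n + 1) n).f
            = (resComplex ι₂ π₂ h₂).d (n+2) (n+1) from rfl, resComplex_d]
        exact hy

end Res



lemma key_lift (ι₂ : G →ₗ[R] P) (π₂ : P →ₗ[R] G) (h₂ : IsShortExact R ι₂ π₂)
    (hP : Module.Projective R P) (hExt : ExtVanishes R G Q 1)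
    (g : P →ₗ[R] Q) (hg : g ∘ₗ (ι₂ ∘ₗ π₂) = 0) :
    ∃ h : P →ₗ[R] Q, h ∘ₗ (ι₂ ∘ₗ π₂) = g := by
  set Pr := res ι₂ π₂ h₂ hP with hPr
  set Y := ModuleCat.of R Q with hY
  have iso := Pr.isoExt (R := R) 1 Y
  have hsub : Subsingleton ((Pr.complex.linearYonedaObj R Y).homology 1) := by
    have hext : Subsingleton (((Ext R (ModuleCat.{u} R) 1).obj
        (Opposite.op (ModuleCat.of R G))).obj Y) := hExt
    constructor
    intro a b
    have ha := iso.inv_hom_id_apply a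
    have hb := iso.inv_hom_id_apply b
    rw [← ha, ← hb]
    exact congrArg iso.hom (Subsingleton.elim _ _)
  have hzero : Limits.IsZero ((Pr.complex.linearYonedaObj R Y).homology 1) :=
    ModuleCat.isZero_of_subsingleton _
  have hexact : (Pr.complex.linearYonedaObj R Y).ExactAt 1 :=
    (HomologicalComplex.exactAt_iff_isZero_homology _ 1).2 hzero
  rw [HomologicalComplex.exactAt_iff' _ 0 1 2 (by simp) (by simp),
    ShortComplex.moduleCat_exact_iff] at hexact
  have hKd10 : Pr.complex.d 1 0 = ModuleCat.ofHom (ι₂ ∘ₗ π₂) := resComplex_d ι₂ π₂ h₂ 0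
  have hKd21 : Pr.complex.d 2 1 = ModuleCat.ofHom (ι₂ ∘ₗ π₂) := resComplex_d ι₂ π₂ h₂ 1
  -- g as an element of degree 1
  let g' : Pr.complex.X 1 ⟶ Y := ModuleCat.ofHom g
  have hcocycle : ((Pr.complex.linearYonedaObj R Y).sc' 0 1 2).g g' = 0 := by
    show (Pr.complex.linearYonedaObj R Y).d 1 2 g' = 0
    rw [ChainComplex.linearYonedaObj_d]
    apply ModuleCat.hom_ext
    apply LinearMap.ext
    intro p
    show g' (Pr.complex.d 2 1 p) = 0
    rw [hKd21]
    exact congrFun (congrArg DFunLike.coe hg) p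
  obtain ⟨h, hh⟩ := hexact g' hcocycle
  let h' : Pr.complex.X 0 ⟶ Y := h
  exact ⟨h'.hom, by exact congrArg ModuleCat.Hom.hom hh⟩

lemma extend_lemma (ι₁ : G →ₗ[R] Q) (ι₂ : G →ₗ[R] P) (π₂ : P →ₗ[R] G)
    (h₂ : IsShortExact R ι₂ π₂) (hP : Module.Projective R P) (hExt : ExtVanishes R G Q 1) :
    ∃ φ : P →ₗ[R] Q, φ ∘ₗ ι₂ = ι₁ := by
  obtain ⟨h, hh⟩ := key_lift ι₂ π₂ h₂ hP hExt (ι₁ ∘ₗ π₂) (by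
    ext p
    show ι₁ (π₂ (ι₂ (π₂ p))) = 0
    rw [π₂ι₂ ι₂ π₂ h₂, map_zero])
  refine ⟨h, ?_⟩
  ext x
  obtain ⟨p, hp⟩ := h₂.2.1 x
  have := congrFun (congrArg DFunLike.coe hh) p
  simp only [LinearMap.comp_apply] at this ⊢
  rw [hp] at this
  exact this

-- chain types for the projective dimension
def chainX (A B : Type u) : ℕ → Type u
  | 0 => A
  | 1 => B
  | _ + 2 => PUnit

instance chainX.addCommGroup (A B : Type u) [AddCommGroup A] [AddCommGroup B] :
    ∀ i, AddCommGroup (chainX A B i)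
  | 0 => inferInstanceAs (AddCommGroup A)
  | 1 => inferInstanceAs (AddCommGroup B)
  | _ + 2 => inferInstanceAs (AddCommGroup PUnit)

instance chainX.module (A B : Type u) [AddCommGroup A] [AddCommGroup B]
    [Module R A] [Module R B] : ∀ i, Module R (chainX A B i)
  | 0 => inferInstanceAs (Module R A)
  | 1 => inferInstanceAs (Module R B)
  | _ + 2 => inferInstanceAs (Module R PUnit.{u+1})

lemma chainX.projective (A B : Type u) [AddCommGroup A] [AddCommGroup B]
    [Module R A] [Module R B] (hA : Module.Projective R A) (hB : Module.Projective R B) :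
    ∀ i, Module.Projective R (chainX A B i)
  | 0 => hA
  | 1 => hB
  | _ + 2 => (Module.Projective.of_free : Module.Projective R PUnit.{u+1})

end AuxSGH

/-- The construction in the proof of Theorem 2.4 (1 ⇒ 2): from a syzygy `G` of `M` with a
self-extension by a projective module, one gets a self-extension `0 → M → X → M → 0` with
`pd X ≤ 1`. -/
theorem statement_18 (R : Type u) [CommRing R]
    (M G Q P : Type u) [AddCommGroup M] [Module R M] [AddCommGroup G] [Module R G]
    [AddCommGroup Q] [Module R Q] [AddCommGroup P] [Module R P]
    (hQ : Module.Projective R Q) (hP : Module.Projective R P)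
    (ι₁ : G →ₗ[R] Q) (π₁ : Q →ₗ[R] M) (h₁ : IsShortExact R ι₁ π₁)
    (ι₂ : G →ₗ[R] P) (π₂ : P →ₗ[R] G) (h₂ : IsShortExact R ι₂ π₂)
    (hExt : ExtVanishes R G Q 1) :
    ∃ (X : Type u) (_ : AddCommGroup X) (_ : Module R X)
      (a : M →ₗ[R] X) (b : X →ₗ[R] M),
      IsShortExact R a b ∧
        (∃ (c : P →ₗ[R] Q × Q) (d : Q × Q →ₗ[R] X), IsShortExact R c d) ∧
        ProjDimLE R X 1 := by
  obtain ⟨φ, hφ⟩ := extend_lemma ι₁ ι₂ π₂ h₂ hP hExt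
  have hφ' : ∀ g : G, φ (ι₂ g) = ι₁ g := fun g => congrFun (congrArg DFunLike.coe hφ) g
  have π₁ι₁ : ∀ g : G, π₁ (ι₁ g) = 0 := by
    intro g
    have : ι₁ g ∈ LinearMap.ker π₁ := by rw [← h₁.2.2]; exact ⟨g, rfl⟩
    exact this
  set c : P →ₗ[R] Q × Q := LinearMap.prod φ (ι₁ ∘ₗ π₂) with hcdef
  set N : Submodule R (Q × Q) := LinearMap.range c with hNdef
  -- injectivity of c
  have hcinj : Function.Injective c := by
    rw [← LinearMap.ker_eq_bot]
    apply (Submodule.eq_bot_iff _).2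
    intro p hp
    have h2 : ι₁ (π₂ p) = 0 := congrArg Prod.snd hp
    have h3 : π₂ p = 0 := h₁.1 (by rw [h2, map_zero])
    have : p ∈ LinearMap.range ι₂ := by rw [h₂.2.2]; exact h3
    obtain ⟨g, rfl⟩ := this
    have h4 : φ (ι₂ g) = 0 := congrArg Prod.fst hp
    rw [hφ' g] at h4
    have : g = 0 := h₁.1 (by rw [h4, map_zero])
    rw [this, map_zero]
  -- the map b
  have hbker : N ≤ LinearMap.ker (π₁ ∘ₗ LinearMap.snd R Q Q) := by
    rintro x ⟨p, rfl⟩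
    show π₁ (ι₁ (π₂ p)) = 0
    exact π₁ι₁ _
  set b : ((Q × Q) ⧸ N) →ₗ[R] M := N.liftQ (π₁ ∘ₗ LinearMap.snd R Q Q) hbker with hbdef
  -- the map a
  set abar : Q →ₗ[R] ((Q × Q) ⧸ N) := N.mkQ ∘ₗ LinearMap.inl R Q Q with habar
  have haker : LinearMap.ker π₁ ≤ LinearMap.ker abar := by
    intro x hx
    have : x ∈ LinearMap.range ι₁ := by rw [h₁.2.2]; exact hx
    obtain ⟨g, rfl⟩ := this
    show N.mkQ (ι₁ g, 0) = 0
    rw [Submodule.mkQ_apply, Submodule.Quotient.mk_eq_zero]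
    refine ⟨ι₂ g, ?_⟩
    show (φ (ι₂ g), ι₁ (π₂ (ι₂ g))) = (ι₁ g, 0)
    rw [hφ' g, π₂ι₂ ι₂ π₂ h₂, map_zero]
  set e := π₁.quotKerEquivOfSurjective h₁.2.1 with hedef
  set a : M →ₗ[R] ((Q × Q) ⧸ N) :=
    ((LinearMap.ker π₁).liftQ abar haker) ∘ₗ e.symm.toLinearMap with hadef
  have ha : ∀ q : Q, a (π₁ q) = N.mkQ (q, 0) := by
    intro q
    show ((LinearMap.ker π₁).liftQ abar haker) (e.symm (π₁ q)) = N.mkQ (q, 0)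
    have : e.symm (π₁ q) = Submodule.Quotient.mk q := by
      rw [LinearEquiv.symm_apply_eq]
      rfl
    rw [this]
    rfl
  refine ⟨(Q × Q) ⧸ N, inferInstance, inferInstance, a, b, ⟨?_, ?_, ?_⟩,
    ⟨c, N.mkQ, hcinj, N.mkQ_surjective, (Submodule.ker_mkQ N).symm⟩, ?_⟩
  · -- injectivity of a
    rw [← LinearMap.ker_eq_bot]
    apply (Submodule.eq_bot_iff _).2
    intro m hm
    obtain ⟨q, rfl⟩ := h₁.2.1 m
    have hm' : a (π₁ q) = 0 := hm
    rw [ha q, Submodule.mkQ_apply, Submodule.Quotient.mk_eq_zero] at hm'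
    obtain ⟨p, hp⟩ := hm'
    have h1 : φ p = q := congrArg Prod.fst hp
    have h2 : ι₁ (π₂ p) = 0 := congrArg Prod.snd hp
    have h3 : π₂ p = 0 := h₁.1 (by rw [h2, map_zero])
    have : p ∈ LinearMap.range ι₂ := by rw [h₂.2.2]; exact h3
    obtain ⟨g, rfl⟩ := this
    rw [hφ' g] at h1
    rw [← h1]
    exact π₁ι₁ g
  · -- surjectivity of b
    intro m
    obtain ⟨q, hq⟩ := h₁.2.1 m
    refine ⟨N.mkQ (0, q), ?_⟩
    show π₁ q = m
    exact hq
  · -- range a = ker b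
    ext x
    constructor
    · rintro ⟨m, rfl⟩
      obtain ⟨q, rfl⟩ := h₁.2.1 m
      rw [LinearMap.mem_ker, ha q]
      show π₁ (0 : Q) = 0
      rw [map_zero]
    · intro hx
      obtain ⟨⟨q₁, q₂⟩, rfl⟩ := N.mkQ_surjective x
      have hbx : π₁ q₂ = 0 := hx
      have : q₂ ∈ LinearMap.range ι₁ := by rw [h₁.2.2]; exact hbx
      obtain ⟨g, rfl⟩ := this
      obtain ⟨p, hpg⟩ := h₂.2.1 g
      refine ⟨π₁ (q₁ - φ p), ?_⟩
      rw [ha]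
      rw [Submodule.mkQ_apply, Submodule.mkQ_apply, Submodule.Quotient.eq]
      refine ⟨-p, ?_⟩
      show (φ (-p), ι₁ (π₂ (-p))) = (q₁ - φ p - q₁, 0 - ι₁ g)
      rw [map_neg, map_neg, map_neg, hpg]
      congr 1
      · abel
      · abel
  · -- ProjDimLE
    haveI := hQ
    haveI := hP
    refine ⟨chainX (Q × Q) P, chainX.addCommGroup _ _, chainX.module _ _,
      (fun i => match i with
        | 0 => c
        | n + 1 => 0), N.mkQ,
      chainX.projective _ _ inferInstance hP, ?_, N.mkQ_surjective, ?_, ?_⟩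
    · intro i hi
      obtain ⟨n, rfl⟩ : ∃ n, i = n + 2 := ⟨i - 2, by omega⟩
      exact inferInstanceAs (Subsingleton PUnit)
    · exact Submodule.ker_mkQ N
    · intro i
      match i with
      | 0 =>
        show LinearMap.ker c = LinearMap.range (0 : PUnit.{u+1} →ₗ[R] P)
        rw [LinearMap.ker_eq_bot.2 hcinj, LinearMap.range_zero]
      | n + 1 =>
        haveI : Subsingleton (chainX (Q × Q) P (n + 1 + 1)) :=
          inferInstanceAs (Subsingleton PUnit)
        haveI : Subsingleton (Submodule R (chainX (Q × Q) P (n + 1 + 1))) :=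
          Submodule.subsingleton_iff R |>.2 inferInstance
        exact Subsingleton.elim _ _
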